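/- (Proposition 3, periodic-tail terminal constraint) Let η > 0, δ > 0, γ ≥ 0, t_k ∈ ℝ, x_z^k ∈ ℝ, C a positive integer, and let (v_i)_{i≥0} be a C-periodic sequence of reals (v_{i+C} = v_i for all i ≥ 0) with |v_i| ≤ γ. Define the piecewise-linear ZMP trajectory x_z(t) = x_z^k + Σ_{i=0}^∞ (ρ(t − t_{k+i}) − ρ(t − t_{k+i+1})) v_i, where ρ(t) = max(t,0) and t_{k+i} = t_k + iδ. Set x_u^k = η ∫_{t_k}^∞ e^{−η(τ−t_k)} x_z(τ) dτ and x_u^{k+C} = η ∫_{t_{k+C}}^∞ e^{−η(τ−t_{k+C})} x_z(τ) dτ. Then x_u^{k+C} − x_z(t_{k+C}) = x_u^k − x_z^k. -/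

import Mathlib

open MeasureTheory Real

open Set in
lemma stmt12_tsum_eq (tk δ : ℝ) (hδ : 0 < δ) (v : ℕ → ℝ) {t : ℝ} {N : ℕ}
    (ht : t ≤ tk + N * δ) :
    ∑' i : ℕ, (max (t - (tk + i * δ)) 0 - max (t - (tk + (i + 1) * δ)) 0) * v i
    = ∑ i ∈ Finset.range N,
        (max (t - (tk + i * δ)) 0 - max (t - (tk + (i + 1) * δ)) 0) * v i := by
  apply tsum_eq_sum
  intro i hi
  have hNi : (N : ℝ) ≤ i := by
    exact_mod_cast Nat.le_of_not_lt (fun h => hi (Finset.mem_range.2 h))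
  have h1 : t - (tk + i * δ) ≤ 0 := by nlinarith
  have h2 : t - (tk + (i + 1) * δ) ≤ 0 := by nlinarith
  rw [max_eq_right h1, max_eq_right h2]
  ring

open Set in
lemma stmt12_cont (tk δ xzk : ℝ) (hδ : 0 < δ) (v : ℕ → ℝ) (xz : ℝ → ℝ)
    (hxz : ∀ t, xz t = xzk + ∑' i : ℕ,
      (max (t - (tk + i * δ)) 0 - max (t - (tk + (i + 1) * δ)) 0) * v i) :
    Continuous xz := by
  rw [continuous_iff_continuousAt]
  intro t0
  obtain ⟨N, hN⟩ : ∃ N : ℕ, t0 + 1 ≤ tk + N * δ := by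
    obtain ⟨N, hN⟩ := exists_nat_ge ((t0 + 1 - tk) / δ)
    exact ⟨N, by rw [div_le_iff₀ hδ] at hN; linarith⟩
  have hg : Continuous fun t => xzk + ∑ i ∈ Finset.range N,
      (max (t - (tk + i * δ)) 0 - max (t - (tk + (i + 1) * δ)) 0) * v i := by
    refine continuous_const.add (continuous_finset_sum _ fun i _ => ?_)
    exact (((continuous_id.sub continuous_const).max continuous_const).sub
      ((continuous_id.sub continuous_const).max continuous_const)).mul continuous_const
  refine hg.continuousAt.congr ?_
  have hmem : Iio (tk + N * δ) ∈ nhds t0 := Iio_mem_nhds (by linarith)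
  filter_upwards [hmem] with t ht
  rw [hxz t, stmt12_tsum_eq tk δ hδ v (le_of_lt ht)]

open Set in
lemma stmt12_bound (tk δ γ xzk : ℝ) (hδ : 0 < δ) (hγ : 0 ≤ γ) (v : ℕ → ℝ)
    (hv : ∀ i, |v i| ≤ γ) (xz : ℝ → ℝ)
    (hxz : ∀ t, xz t = xzk + ∑' i : ℕ,
      (max (t - (tk + i * δ)) 0 - max (t - (tk + (i + 1) * δ)) 0) * v i)
    (t : ℝ) : |xz t - xzk| ≤ γ * max (t - tk) 0 := by
  obtain ⟨N, hN⟩ : ∃ N : ℕ, t ≤ tk + N * δ := by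
    obtain ⟨N, hN⟩ := exists_nat_ge ((t - tk) / δ)
    exact ⟨N, by rw [div_le_iff₀ hδ] at hN; linarith⟩
  rw [hxz t, stmt12_tsum_eq tk δ hδ v hN, add_sub_cancel_left, mul_comm γ]
  calc |∑ i ∈ Finset.range N,
        (max (t - (tk + i * δ)) 0 - max (t - (tk + (i + 1) * δ)) 0) * v i|
      ≤ ∑ i ∈ Finset.range N,
        |(max (t - (tk + i * δ)) 0 - max (t - (tk + (i + 1) * δ)) 0) * v i| :=
        Finset.abs_sum_le_sum_abs _ _
    _ ≤ ∑ i ∈ Finset.range N,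
        (max (t - (tk + i * δ)) 0 - max (t - (tk + (i + 1) * δ)) 0) * γ := by
        refine Finset.sum_le_sum fun i _ => ?_
        rw [abs_mul]
        have hnn : 0 ≤ max (t - (tk + i * δ)) 0 - max (t - (tk + (i + 1) * δ)) 0 := by
          have h : t - (tk + (i + 1) * δ) ≤ t - (tk + i * δ) := by nlinarith
          simpa using max_le_max h (le_refl (0:ℝ))
        rw [abs_of_nonneg hnn]
        exact mul_le_mul_of_nonneg_left (hv i) hnn
    _ = (∑ i ∈ Finset.range N,
        (max (t - (tk + i * δ)) 0 - max (t - (tk + (i + 1) * δ)) 0)) * γ := by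
        rw [Finset.sum_mul]
    _ ≤ max (t - tk) 0 * γ := by
        refine mul_le_mul_of_nonneg_right ?_ hγ
        have htel := Finset.sum_range_sub' (fun i : ℕ => max (t - (tk + i * δ)) 0) N
        push_cast at htel
        rw [htel]
        have h0 : tk + 0 * δ = tk := by ring
        rw [h0]
        exact sub_le_self _ (le_max_right _ _)

open Set in
lemma stmt12_shift (tk δ xzk : ℝ) (hδ : 0 < δ) (C : ℕ) (v : ℕ → ℝ)
    (hper : ∀ i, v (i + C) = v i) (xz : ℝ → ℝ)
    (hxz : ∀ t, xz t = xzk + ∑' i : ℕ,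
      (max (t - (tk + i * δ)) 0 - max (t - (tk + (i + 1) * δ)) 0) * v i)
    {t : ℝ} (ht : tk ≤ t) :
    xz (t + C * δ) = xz t + ∑ i ∈ Finset.range C, δ * v i := by
  obtain ⟨N, hN⟩ : ∃ N : ℕ, t ≤ tk + N * δ := by
    obtain ⟨N, hN⟩ := exists_nat_ge ((t - tk) / δ)
    exact ⟨N, by rw [div_le_iff₀ hδ] at hN; linarith⟩
  have hN' : t + C * δ ≤ tk + (C + N : ℕ) * δ := by push_cast; linarith
  rw [hxz (t + C * δ), stmt12_tsum_eq tk δ hδ v hN',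
    Finset.sum_range_add, hxz t, stmt12_tsum_eq tk δ hδ v hN]
  have h1 : ∑ i ∈ Finset.range C,
      (max (t + C * δ - (tk + i * δ)) 0 - max (t + C * δ - (tk + (i + 1) * δ)) 0) * v i
      = ∑ i ∈ Finset.range C, δ * v i := by
    refine Finset.sum_congr rfl fun i hi => ?_
    have hiC : (i : ℝ) + 1 ≤ C := by
      exact_mod_cast Nat.succ_le_of_lt (Finset.mem_range.1 hi)
    have hb : 0 ≤ t + C * δ - (tk + (i + 1) * δ) := by nlinarith
    have ha : 0 ≤ t + C * δ - (tk + i * δ) := by nlinarith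
    rw [max_eq_left ha, max_eq_left hb]
    ring
  have h2 : ∑ i ∈ Finset.range N,
      (max (t + C * δ - (tk + (C + i : ℕ) * δ)) 0
        - max (t + C * δ - (tk + ((C + i : ℕ) + 1) * δ)) 0) * v (C + i)
      = ∑ i ∈ Finset.range N,
        (max (t - (tk + i * δ)) 0 - max (t - (tk + (i + 1) * δ)) 0) * v i := by
    refine Finset.sum_congr rfl fun i _ => ?_
    have e1 : t + C * δ - (tk + (C + i : ℕ) * δ) = t - (tk + i * δ) := by push_cast; ring
    have e2 : t + C * δ - (tk + ((C + i : ℕ) + 1) * δ) = t - (tk + (i + 1) * δ) := by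
      push_cast; ring
    rw [e1, e2, add_comm C i, hper i]
  rw [h1, h2]; ring

open Set in
lemma stmt12_integral_shift (b c : ℝ) (F : ℝ → ℝ) :
    ∫ x in Ioi b, F x = ∫ x in Ioi (b - c), F (x + c) := by
  rw [← integral_indicator measurableSet_Ioi, ← integral_indicator measurableSet_Ioi,
    ← integral_add_right_eq_self (fun x => (Ioi b).indicator F x) c]
  congr 1
  funext x
  simp only [indicator, mem_Ioi]
  by_cases h : b - c < x
  · rw [if_pos (by linarith), if_pos h]
  · rw [if_neg (fun hh => h (by linarith)), if_neg h]

open Set in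
lemma stmt12_exp_integrable (a c : ℝ) (hc : 0 < c) :
    IntegrableOn (fun x => Real.exp (-c * (x - a))) (Ioi a) := by
  have h := exp_neg_integrableOn_Ioi a hc
  have he : (fun x => Real.exp (-c * (x - a)))
      = fun x => Real.exp (c * a) * Real.exp (-c * x) := by
    funext x; rw [← Real.exp_add]; ring_nf
  rw [he]; exact h.const_mul _

open Set in
lemma stmt12_exp_integral (a c : ℝ) (hc : 0 < c) :
    ∫ x in Ioi a, Real.exp (-c * (x - a)) = 1 / c := by
  have hderiv : ∀ x ∈ Ici a, HasDerivAt (fun y => -Real.exp (-c * (y - a)) / c)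
      (Real.exp (-c * (x - a))) x := by
    intro x _
    have h1 : HasDerivAt (fun y : ℝ => -c * (y - a)) (-c) x := by
      simpa using ((hasDerivAt_id x).sub_const a).const_mul (-c)
    have h3 := (h1.exp.neg).div_const c
    have hc0 : c ≠ 0 := hc.ne'
    refine h3.congr_deriv ?_
    rw [mul_neg, neg_neg, mul_div_assoc, div_self hc0, mul_one]
  have htend : Filter.Tendsto (fun y => -Real.exp (-c * (y - a)) / c)
      Filter.atTop (nhds 0) := by
    have h1 : Filter.Tendsto (fun y : ℝ => -c * (y - a)) Filter.atTop Filter.atBot := by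
      have h2 : Filter.Tendsto (fun y : ℝ => y - a) Filter.atTop Filter.atTop :=
        Filter.tendsto_atTop_add_const_right _ (-a) Filter.tendsto_id
      have h3 := h2.const_mul_atTop hc
      have h4 := Filter.tendsto_neg_atTop_atBot.comp h3
      refine h4.congr fun y => ?_
      simp [Function.comp]
    have h5 := (Real.tendsto_exp_atBot.comp h1).neg.div_const c
    simpa using h5
  have := integral_Ioi_of_hasDerivAt_of_tendsto' hderiv (stmt12_exp_integrable a c hc) htend
  rw [this]
  simp
  ring

/-- Proposition 3, periodic-tail terminal constraint: if the ZMP velocity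
samples are `C`-periodic and bounded by `γ`, then
`x_u^{k+C} − x_z(t_{k+C}) = x_u^k − x_z^k`. -/
theorem stmt_12 (η δ γ tk xzk : ℝ) (hη : 0 < η) (hδ : 0 < δ) (hγ : 0 ≤ γ)
    (C : ℕ) (hC : 0 < C)
    (v : ℕ → ℝ) (hper : ∀ i, v (i + C) = v i) (hv : ∀ i, |v i| ≤ γ)
    (xz : ℝ → ℝ)
    (hxz : ∀ t, xz t = xzk + ∑' i : ℕ,
      (max (t - (tk + i * δ)) 0 - max (t - (tk + (i + 1) * δ)) 0) * v i)
    (xuk xukC : ℝ)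
    (hxuk : xuk = η * ∫ τ in Set.Ioi tk, Real.exp (-η * (τ - tk)) * xz τ)
    (hxukC : xukC = η * ∫ τ in Set.Ioi (tk + C * δ),
        Real.exp (-η * (τ - (tk + C * δ))) * xz τ) :
    xukC - xz (tk + C * δ) = xuk - xzk := by
  have hcont := stmt12_cont tk δ xzk hδ v xz hxz
  set S := ∑ i ∈ Finset.range C, δ * v i with hS
  -- value of xz at the initial time and at the shifted time
  have hxztk : xz tk = xzk := by
    have h0 : tk ≤ tk + (0 : ℕ) * δ := by simp
    rw [hxz tk, stmt12_tsum_eq tk δ hδ v h0]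
    simp
  have hxzb : xz (tk + C * δ) = xzk + S := by
    have h := stmt12_shift tk δ xzk hδ C v hper xz hxz (le_refl tk)
    rw [hxztk] at h
    exact h
  -- integrability facts
  have hint1 : IntegrableOn (fun σ => Real.exp (-η * (σ - tk)) * xz σ) (Set.Ioi tk) := by
    have hK : IntegrableOn
        (fun σ => (|xzk| + 2 * γ / η) * Real.exp (-(η / 2) * (σ - tk))) (Set.Ioi tk) :=
      (stmt12_exp_integrable tk (η / 2) (half_pos hη)).const_mul _
    refine Integrable.mono' hK ?_ ?_
    · exact ((Real.continuous_exp.comp (continuous_const.mul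
        (continuous_id.sub continuous_const))).mul hcont).aestronglyMeasurable
    · filter_upwards [ae_restrict_mem measurableSet_Ioi] with σ hσ
      have hs : (0:ℝ) ≤ σ - tk := by
        have := Set.mem_Ioi.1 hσ; linarith
      have hb := stmt12_bound tk δ γ xzk hδ hγ v hv xz hxz σ
      rw [max_eq_left hs] at hb
      have hxza : |xz σ| ≤ |xzk| + γ * (σ - tk) := by
        have h := abs_add_le (xz σ - xzk) xzk
        simp only [sub_add_cancel] at h
        linarith
      rw [Real.norm_eq_abs, abs_mul, abs_of_nonneg (Real.exp_pos _).le]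
      set s := σ - tk with hsdef
      set Y := Real.exp (-(η / 2) * s) with hY
      have hYpos : 0 < Y := Real.exp_pos _
      have hX : Real.exp (-η * s) = Y * Y := by
        rw [hY, ← Real.exp_add]; ring_nf
      have hY1 : Y ≤ 1 := by
        rw [hY]
        exact Real.exp_le_one_iff.2 (by nlinarith)
      clear_value s Y
      have hsY : s * Y ≤ 2 / η := by
        have hE := Real.add_one_le_exp (η / 2 * s)
        have hEE : Real.exp (η / 2 * s) * Y = 1 := by
          rw [hY, ← Real.exp_add]; ring_nf; exact Real.exp_zero
        rw [le_div_iff₀ hη]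
        have h6 : (η / 2 * s + 1) * Y ≤ 1 := by
          calc (η / 2 * s + 1) * Y ≤ Real.exp (η / 2 * s) * Y :=
                mul_le_mul_of_nonneg_right hE hYpos.le
            _ = 1 := hEE
        nlinarith [h6, hYpos.le]
      have hA : (0:ℝ) ≤ |xzk| := abs_nonneg _
      calc Real.exp (-η * s) * |xz σ| ≤ Real.exp (-η * s) * (|xzk| + γ * s) :=
            mul_le_mul_of_nonneg_left hxza (Real.exp_pos _).le
        _ = Y * (Y * |xzk| + γ * (s * Y)) := by rw [hX]; ring
        _ ≤ Y * (|xzk| + γ * (2 / η)) := by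
            refine mul_le_mul_of_nonneg_left ?_ hYpos.le
            have h1 : Y * |xzk| ≤ |xzk| := by nlinarith
            have h2 : γ * (s * Y) ≤ γ * (2 / η) := mul_le_mul_of_nonneg_left hsY hγ
            linarith
        _ = (|xzk| + 2 * γ / η) * Y := by ring
  have hint2 : IntegrableOn (fun σ => Real.exp (-η * (σ - tk)) * S) (Set.Ioi tk) :=
    (stmt12_exp_integrable tk η hη).mul_const S
  -- change of variables in the shifted integral
  have hshift : (∫ τ in Set.Ioi (tk + C * δ), Real.exp (-η * (τ - (tk + C * δ))) * xz τ)
      = ∫ σ in Set.Ioi tk, Real.exp (-η * (σ - tk)) * (xz σ + S) := by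
    rw [stmt12_integral_shift (tk + C * δ) (C * δ)
      (fun τ => Real.exp (-η * (τ - (tk + C * δ))) * xz τ)]
    have hbb : tk + C * δ - C * δ = tk := by ring
    rw [hbb]
    refine setIntegral_congr_fun measurableSet_Ioi fun σ hσ => ?_
    have h1 : σ + C * δ - (tk + C * δ) = σ - tk := by ring
    rw [h1, stmt12_shift tk δ xzk hδ C v hper xz hxz (le_of_lt (Set.mem_Ioi.1 hσ))]
  -- split and evaluate
  have hsplit : (∫ σ in Set.Ioi tk, Real.exp (-η * (σ - tk)) * (xz σ + S))
      = (∫ σ in Set.Ioi tk, Real.exp (-η * (σ - tk)) * xz σ)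
        + ∫ σ in Set.Ioi tk, Real.exp (-η * (σ - tk)) * S := by
    rw [← integral_add hint1 hint2]
    congr 1; funext σ; ring
  have hval : (∫ σ in Set.Ioi tk, Real.exp (-η * (σ - tk)) * S) = S / η := by
    rw [integral_mul_const, stmt12_exp_integral tk η hη]
    ring
  have hxukC' : xukC = xuk + S := by
    rw [hxukC, hshift, hsplit, hval, hxuk]
    field_simp
  rw [hxukC', hxzb]
  ring
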